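/- Let g,d ∈ ℕ* and (a_{−g},…,a_d) ∈ [0,1]^{g+d+1} with a_{−g} > 0, a_d > 0, ∑_{k=−g}^{d} a_k = 1 and ∑_{k=−g}^{d} k·a_k < 0. Then the function N(·) is constant on the annulus Λ := {λ ∈ ℂ : δ̂ < |λ| < 1}: for any λ₁, λ₂ ∈ Λ, the number of roots of E_{λ₁} of modulus < γ̂ counted with multiplicity equals the number of roots of E_{λ₂} of modulus < γ̂ counted with multiplicity. -/

import Mathlib

/-- `φ(t) := ∑_{k=-g}^{d} a_k t^k`. -/
noncomputable def phiF (g d : ℕ) (a : ℤ → ℝ) (t : ℝ) : ℝ :=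
  ∑ k ∈ Finset.Icc (-(g : ℤ)) (d : ℤ), a k * t ^ k

/-- The polynomial `E_λ(z) := ∑_{k=-g}^{d} a_k z^{g+k} - λ z^g`. -/
noncomputable def Epoly (g d : ℕ) (a : ℤ → ℝ) (lam : ℂ) : Polynomial ℂ :=
  (∑ k ∈ Finset.Icc (-(g : ℤ)) (d : ℤ),
      Polynomial.C ((a k : ℝ) : ℂ) * Polynomial.X ^ ((g : ℤ) + k).toNat)
    - Polynomial.C lam * Polynomial.X ^ g

open scoped Classical in
/-- `N(λ)`: number of roots of `E_λ` of modulus `< γ̂`, counted with multiplicity. -/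
noncomputable def Ncount (g d : ℕ) (a : ℤ → ℝ) (γhat : ℝ) (lam : ℂ) : ℕ :=
  Multiset.card (Multiset.filter (fun z => ‖z‖ < γhat) (Epoly g d a lam).roots)


section MyAux
open Polynomial Filter Finset

lemma myNormRootLe {p : Polynomial ℂ} (hm : p.Monic) {z : ℂ} (hz : p.IsRoot z) {B : ℝ}
    (hB : ∀ i, ‖p.coeff i‖ ≤ B) : ‖z‖ ≤ max 1 (p.natDegree * B) := by
  rcases le_or_gt (‖z‖) 1 with h1 | h1
  · exact le_max_of_le_left h1
  refine le_max_of_le_right ?_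
  set N := p.natDegree with hN
  have hB0 : 0 ≤ B := le_trans (norm_nonneg _) (hB 0)
  have hN1 : 1 ≤ N := by
    rcases Nat.eq_zero_or_pos N with h0 | h
    · exfalso
      have h1' : p = 1 := hm.natDegree_eq_zero.mp h0
      rw [IsRoot, h1'] at hz
      simp at hz
    · exact h
  have hev : (0:ℂ) = ∑ i ∈ range (N+1), p.coeff i * z ^ i := by
    have := Polynomial.eval_eq_sum_range' (p := p) (Nat.lt_succ_self N) z
    rw [← this]; exact hz.symm
  have hsplit : (∑ i ∈ range (N+1), p.coeff i * z ^ i)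
      = (∑ i ∈ range N, p.coeff i * z ^ i) + z ^ N := by
    rw [Finset.sum_range_succ, hm.coeff_natDegree]; ring
  have hzN : z ^ N = -(∑ i ∈ range N, p.coeff i * z ^ i) := by
    linear_combination -hev - hsplit
  have habs : ‖z‖ ^ N ≤ N * (B * ‖z‖ ^ (N-1)) := by
    calc ‖z‖ ^ N = ‖z ^ N‖ := by rw [norm_pow]
    _ = ‖∑ i ∈ range N, p.coeff i * z ^ i‖ := by rw [hzN, norm_neg]
    _ ≤ ∑ i ∈ range N, ‖p.coeff i * z ^ i‖ := norm_sum_le _ _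
    _ ≤ ∑ i ∈ range N, B * ‖z‖ ^ (N-1) := by
        refine Finset.sum_le_sum fun i hi => ?_
        rw [norm_mul, norm_pow]
        have hi' := Finset.mem_range.mp hi
        have h2 : ‖z‖ ^ i ≤ ‖z‖ ^ (N-1) :=
          pow_le_pow_right₀ h1.le (by omega)
        exact mul_le_mul (hB i) h2 (pow_nonneg (norm_nonneg _) _) hB0
    _ = N * (B * ‖z‖ ^ (N-1)) := by rw [Finset.sum_const, card_range, nsmul_eq_mul]
  have hpos : 0 < ‖z‖ ^ (N-1) := pow_pos (lt_trans one_pos h1) _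
  have hNsplit : ‖z‖ ^ N = ‖z‖ * ‖z‖ ^ (N-1) := by
    rw [← pow_succ']
    congr 1
    omega
  rw [hNsplit, ← mul_assoc] at habs
  exact le_of_mul_le_mul_right habs hpos


lemma myRootsSubseq : ∀ (N : ℕ) (p : ℕ → Polynomial ℂ) (q : Polynomial ℂ),
    (∀ n, (p n).Monic) → (∀ n, (p n).natDegree = N) → q.Monic → q.natDegree = N →
    (∀ i, Tendsto (fun n => (p n).coeff i) atTop (nhds (q.coeff i))) →
    ∃ φ : ℕ → ℕ, StrictMono φ ∧ ∃ z : ℕ → Fin N → ℂ, ∃ w : Fin N → ℂ,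
      (∀ n, p (φ n) = ∏ i, (X - C (z n i))) ∧ (q = ∏ i, (X - C (w i))) ∧
      (∀ i, Tendsto (fun n => z n i) atTop (nhds (w i))) := by
  intro N
  induction N with
  | zero =>
    intro p q hmp hdp hmq hdq hc
    refine ⟨id, strictMono_id, fun _ => Fin.elim0, Fin.elim0, ?_, ?_, fun i => i.elim0⟩
    · intro n; simp [(hmp n).natDegree_eq_zero.mp (hdp n)]
    · simp [hmq.natDegree_eq_zero.mp hdq]
  | succ N IH =>
    intro p q hmp hdp hmq hdq hc
    have hBex : ∀ i : ℕ, ∃ Bi : ℝ, ∀ n, ‖(p n).coeff i‖ ≤ Bi := by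
      intro i
      obtain ⟨Bi, hBi⟩ := (hc i).norm.bddAbove_range
      exact ⟨Bi, fun n => by
        have := hBi (Set.mem_range_self (f := fun n => ‖(p n).coeff i‖) n)
        simpa using this⟩
    choose Bf hBf using hBex
    set B := ∑ i ∈ range (N+2), Bf i with hB
    have hBf0 : ∀ i, 0 ≤ Bf i := fun i => le_trans (norm_nonneg _) (hBf i 0)
    have hBB : ∀ n i, ‖(p n).coeff i‖ ≤ B := by
      intro n i
      rcases lt_or_ge i (N+2) with h | h
      · exact (hBf i n).trans (Finset.single_le_sum (fun j _ => hBf0 j) (Finset.mem_range.mpr h))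
      · have h0 : (p n).coeff i = 0 := coeff_eq_zero_of_natDegree_lt (by rw [hdp n]; omega)
        rw [h0]
        simpa using Finset.sum_nonneg fun j (_ : j ∈ range (N+2)) => hBf0 j
    have hroot : ∀ n, ∃ z, (p n).IsRoot z := by
      intro n
      refine Complex.exists_root ?_
      rw [degree_eq_natDegree (hmp n).ne_zero, hdp n]
      exact_mod_cast Nat.succ_pos N
    choose ζ hζ using hroot
    obtain ⟨w₀, -, φ₁, hφ₁, hlim⟩ :=
      tendsto_subseq_of_bounded (Metric.isBounded_closedBall
        (x := (0:ℂ)) (r := max 1 ((N+1) * B))) (x := ζ) (fun n => by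
          have h := myNormRootLe (hmp n) (hζ n) (hBB n)
          rw [hdp n] at h
          simpa [Metric.mem_closedBall, Complex.dist_eq] using h)
    have hq0 : q.IsRoot w₀ := by
      have h2 : Tendsto (fun n => ∑ i ∈ range (N+2), (p (φ₁ n)).coeff i * (ζ (φ₁ n)) ^ i)
          atTop (nhds (∑ i ∈ range (N+2), q.coeff i * w₀ ^ i)) := by
        refine tendsto_finset_sum _ fun i _ => Tendsto.mul ?_ ?_
        · exact (hc i).comp hφ₁.tendsto_atTop
        · exact hlim.pow i
      have h3 : (fun n => ∑ i ∈ range (N+2), (p (φ₁ n)).coeff i * (ζ (φ₁ n)) ^ i)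
          = fun _ => (0:ℂ) := by
        funext n
        rw [← Polynomial.eval_eq_sum_range' (by rw [hdp]; omega) (ζ (φ₁ n))]
        exact hζ (φ₁ n)
      rw [h3] at h2
      have h4 : (0:ℂ) = ∑ i ∈ range (N+2), q.coeff i * w₀ ^ i :=
        tendsto_nhds_unique (tendsto_const_nhds (x := (0:ℂ)) (f := atTop (α := ℕ))) h2
      rw [IsRoot, Polynomial.eval_eq_sum_range' (n := N+2) (by rw [hdq]; omega) w₀]
      exact h4.symm
    set av := fun n => ζ (φ₁ n) with hav
    set p' := fun n => (p (φ₁ n)) /ₘ (X - C (av n)) with hp'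
    set q' := q /ₘ (X - C w₀) with hq'
    have hfac : ∀ n, (X - C (av n)) * p' n = p (φ₁ n) :=
      fun n => mul_divByMonic_eq_iff_isRoot.mpr (hζ (φ₁ n))
    have hfacq : (X - C w₀) * q' = q := mul_divByMonic_eq_iff_isRoot.mpr hq0
    have hmp' : ∀ n, (p' n).Monic :=
      fun n => (monic_X_sub_C (av n)).of_mul_monic_left (by rw [hfac n]; exact hmp _)
    have hmq' : q'.Monic := (monic_X_sub_C w₀).of_mul_monic_left (by rw [hfacq]; exact hmq)
    have hdp' : ∀ n, (p' n).natDegree = N := by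
      intro n
      have h := congrArg natDegree (hfac n)
      rw [natDegree_mul (X_sub_C_ne_zero _) (hmp' n).ne_zero, natDegree_X_sub_C, hdp] at h
      omega
    have hdq' : q'.natDegree = N := by
      have h := congrArg natDegree hfacq
      rw [natDegree_mul (X_sub_C_ne_zero _) hmq'.ne_zero, natDegree_X_sub_C, hdq] at h
      omega
    have hlim' : Tendsto av atTop (nhds w₀) := hlim
    have hc' : ∀ i, Tendsto (fun n => (p' n).coeff i) atTop (nhds (q'.coeff i)) := by
      intro i
      have e1 : ∀ n, (p' n).coeff i
          = ∑ j ∈ Icc (i+1) (N+1), (av n) ^ (j - (i+1)) * (p (φ₁ n)).coeff j := by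
        intro n
        rw [hp', coeff_divByMonic_X_sub_C, hdp]
      have e2 : q'.coeff i = ∑ j ∈ Icc (i+1) (N+1), w₀ ^ (j - (i+1)) * q.coeff j := by
        rw [hq', coeff_divByMonic_X_sub_C, hdq]
      simp only [e1, e2]
      exact tendsto_finset_sum _ fun j _ =>
        (hlim'.pow _).mul ((hc j).comp hφ₁.tendsto_atTop)
    obtain ⟨φ₂, hφ₂, z', w', hz', hw', hcz⟩ := IH p' q' hmp' hdp' hmq' hdq' hc'
    refine ⟨φ₁ ∘ φ₂, hφ₁.comp hφ₂, fun n => Fin.cons (av (φ₂ n)) (z' n), Fin.cons w₀ w',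
      ?_, ?_, ?_⟩
    · intro n
      have := hfac (φ₂ n)
      rw [hz' n] at this
      rw [Function.comp_apply, ← this, Fin.prod_univ_succ]
      simp [Fin.cons_succ, Fin.cons_zero]
    · rw [← hfacq, hw', Fin.prod_univ_succ]
      simp [Fin.cons_succ, Fin.cons_zero]
    · intro i
      refine Fin.cases ?_ ?_ i
      · simpa [Fin.cons_zero, Function.comp_def] using hlim'.comp hφ₂.tendsto_atTop
      · intro j
        simpa [Fin.cons_succ] using hcz j


lemma myRootsProd {N : ℕ} (f : Fin N → ℂ) :
    (∏ i, (X - C (f i))).roots = Multiset.map f Finset.univ.val := by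
  have h : ∏ i, (X - C (f i))
      = (Multiset.map (fun a => X - C a) (Multiset.map f Finset.univ.val)).prod := by
    rw [Multiset.map_map]
    rfl
  rw [h, roots_multiset_prod_X_sub_C]

lemma myCountSubseq (N : ℕ) (p : ℕ → Polynomial ℂ) (q : Polynomial ℂ) (r : ℝ)
    (hmp : ∀ n, (p n).Monic) (hdp : ∀ n, (p n).natDegree = N)
    (hmq : q.Monic) (hdq : q.natDegree = N)
    (hc : ∀ i, Tendsto (fun n => (p n).coeff i) atTop (nhds (q.coeff i)))
    (hr : ∀ z ∈ q.roots, ‖z‖ ≠ r) :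
    ∃ n, Multiset.card (Multiset.filter (fun z => ‖z‖ < r) (p n).roots)
      = Multiset.card (Multiset.filter (fun z => ‖z‖ < r) q.roots) := by
  obtain ⟨φ, hφ, z, w, hz, hw, hcz⟩ := myRootsSubseq N p q hmp hdp hmq hdq hc
  have hwr : ∀ i, ‖w i‖ ≠ r := by
    intro i
    apply hr
    rw [hw, myRootsProd]
    exact Multiset.mem_map_of_mem _ (Finset.mem_univ i)
  have hev : ∀ᶠ n in atTop, ∀ i, (‖z n i‖ < r ↔ ‖w i‖ < r) := by
    refine Filter.eventually_all.mpr fun i => ?_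
    have habs : Tendsto (fun n => ‖z n i‖) atTop (nhds (‖w i‖)) :=
      (continuous_norm.tendsto _).comp (hcz i)
    rcases lt_or_gt_of_ne (hwr i) with h | h
    · filter_upwards [habs.eventually (eventually_lt_nhds h)] with n hn
      simp [hn, h]
    · filter_upwards [habs.eventually (eventually_gt_nhds h)] with n hn
      simp [not_lt_of_gt hn, not_lt_of_gt h]
  obtain ⟨n, hn⟩ := hev.exists
  refine ⟨φ n, ?_⟩
  rw [hz n, hw, myRootsProd, myRootsProd, Multiset.filter_map, Multiset.filter_map,
    Multiset.card_map, Multiset.card_map]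
  congr 1
  exact Multiset.filter_congr fun i _ => hn i


section Aux4
variable (g d : ℕ) (a : ℤ → ℝ) (lam : ℂ)

lemma EpolyCoeffTop (hd : 1 ≤ d) : (Epoly g d a lam).coeff (g+d) = ((a d : ℝ):ℂ) := by
  rw [Epoly, coeff_sub, finset_sum_coeff]
  have h1 : ∀ k ∈ Finset.Icc (-(g:ℤ)) (d:ℤ), k ≠ (d:ℤ) →
      (C ((a k:ℝ):ℂ) * X ^ ((g:ℤ)+k).toNat).coeff (g+d) = 0 := by
    intro k hk hkd
    rw [coeff_C_mul, coeff_X_pow, if_neg, mul_zero]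
    simp only [Finset.mem_Icc] at hk
    omega
  rw [Finset.sum_eq_single_of_mem (d:ℤ) (by simp only [Finset.mem_Icc]; omega) h1,
    coeff_C_mul, coeff_X_pow, if_pos (by omega), mul_one,
    coeff_C_mul, coeff_X_pow, if_neg (by omega), mul_zero, sub_zero]

lemma EpolyNatDegreeLe : (Epoly g d a lam).natDegree ≤ g + d := by
  refine (natDegree_sub_le _ _).trans (max_le ?_ ?_)
  · refine natDegree_sum_le_of_forall_le _ _ fun k hk => ?_
    refine (natDegree_C_mul_le _ _).trans ?_
    rw [natDegree_X_pow]
    simp only [Finset.mem_Icc] at hk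
    omega
  · refine (natDegree_C_mul_le _ _).trans ?_
    rw [natDegree_X_pow]
    omega

lemma EpolyNatDegree (hd : 1 ≤ d) (had : a d ≠ 0) : (Epoly g d a lam).natDegree = g + d := by
  refine le_antisymm (EpolyNatDegreeLe g d a lam) (le_natDegree_of_ne_zero ?_)
  rw [EpolyCoeffTop g d a lam hd]
  exact_mod_cast had

lemma EpolyNeZero (hd : 1 ≤ d) (had : a d ≠ 0) : Epoly g d a lam ≠ 0 := by
  intro h
  have := EpolyCoeffTop g d a lam hd
  rw [h, coeff_zero] at this
  exact had (by exact_mod_cast this.symm)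

lemma EpolyEval (z : ℂ) : (Epoly g d a lam).eval z
    = (∑ k ∈ Finset.Icc (-(g:ℤ)) (d:ℤ), ((a k : ℝ):ℂ) * z ^ ((g:ℤ)+k).toNat) - lam * z ^ g := by
  simp [Epoly, eval_finset_sum]

lemma EpolyNoCircleRoot (γhat : ℝ) (hγ0 : 0 < γhat)
    (ha0 : ∀ k ∈ Finset.Icc (-(g:ℤ)) (d:ℤ), 0 ≤ a k)
    (hlam : phiF g d a γhat < ‖lam‖) :
    ∀ z, (Epoly g d a lam).IsRoot z → ‖z‖ ≠ γhat := by
  intro z hz habs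
  have hγne : γhat ≠ 0 := ne_of_gt hγ0
  have heval : lam * z ^ g = ∑ k ∈ Finset.Icc (-(g:ℤ)) (d:ℤ), ((a k : ℝ):ℂ) * z ^ ((g:ℤ)+k).toNat := by
    have := hz
    rw [IsRoot, EpolyEval, sub_eq_zero] at this
    exact this.symm
  have hpow : ∀ k ∈ Finset.Icc (-(g:ℤ)) (d:ℤ), γhat ^ ((g:ℤ)+k).toNat = γhat ^ g * γhat ^ k := by
    intro k hk
    simp only [Finset.mem_Icc] at hk
    have hnn : (0:ℤ) ≤ (g:ℤ) + k := by omega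
    have h1 : γhat ^ ((g:ℤ)+k).toNat = γhat ^ ((((g:ℤ)+k).toNat : ℤ)) := (zpow_natCast _ _).symm
    rw [h1, Int.toNat_of_nonneg hnn, zpow_add₀ hγne, zpow_natCast]
  have hle : ‖lam * z ^ g‖ ≤ γhat ^ g * phiF g d a γhat := by
    rw [heval]
    calc ‖∑ k ∈ Finset.Icc (-(g:ℤ)) (d:ℤ), ((a k : ℝ):ℂ) * z ^ ((g:ℤ)+k).toNat‖
        ≤ ∑ k ∈ Finset.Icc (-(g:ℤ)) (d:ℤ), ‖((a k : ℝ):ℂ) * z ^ ((g:ℤ)+k).toNat‖ :=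
          norm_sum_le _ _
      _ = ∑ k ∈ Finset.Icc (-(g:ℤ)) (d:ℤ), a k * (γhat ^ g * γhat ^ k) := by
          refine Finset.sum_congr rfl fun k hk => ?_
          rw [norm_mul, norm_pow, habs, hpow k hk, Complex.norm_real, Real.norm_eq_abs, abs_of_nonneg (ha0 k hk)]
      _ = γhat ^ g * phiF g d a γhat := by
          rw [phiF, Finset.mul_sum]
          exact Finset.sum_congr rfl fun k _ => by ring
  rw [norm_mul, norm_pow, habs] at hle
  have hgpos : (0:ℝ) < γhat ^ g := pow_pos hγ0 g
  nlinarith [hle, hlam, hgpos]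
end Aux4


lemma myAnnulusPreconnected {δ : ℝ} (hδ : 0 ≤ δ) :
    IsPreconnected {lam : ℂ | δ < ‖lam‖ ∧ ‖lam‖ < 1} := by
  have h1 : IsPreconnected ((Set.Ioo δ 1) ×ˢ (Metric.sphere (0:ℂ) 1)) :=
    isPreconnected_Ioo.prod
      (isPreconnected_sphere (by rw [Complex.rank_real_complex]; norm_num) 0 1)
  have h2 : IsPreconnected ((fun p : ℝ × ℂ => p.1 • p.2) ''
      ((Set.Ioo δ 1) ×ˢ (Metric.sphere (0:ℂ) 1))) :=
    h1.image _ continuous_smul.continuousOn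
  have h3 : (fun p : ℝ × ℂ => p.1 • p.2) '' ((Set.Ioo δ 1) ×ˢ (Metric.sphere (0:ℂ) 1))
      = {lam : ℂ | δ < ‖lam‖ ∧ ‖lam‖ < 1} := by
    ext lam
    constructor
    · rintro ⟨⟨r, u⟩, ⟨⟨hr1, hr2⟩, hu⟩, rfl⟩
      have hu1 : ‖u‖ = 1 := by rwa [mem_sphere_zero_iff_norm] at hu
      have : ‖r • u‖ = r := by
        rw [norm_smul, hu1, mul_one, Real.norm_eq_abs,
          abs_of_nonneg (le_trans hδ hr1.le)]
      constructor <;> simp only [Set.mem_setOf_eq, this] <;> assumption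
    · rintro ⟨h1', h2'⟩
      have hpos : 0 < ‖lam‖ := lt_of_le_of_lt hδ h1'
      have hne : lam ≠ 0 := by
        intro h; rw [h] at hpos; simp at hpos
      refine ⟨(‖lam‖, (‖lam‖)⁻¹ • lam), ⟨⟨h1', h2'⟩, ?_⟩, ?_⟩
      · rw [mem_sphere_zero_iff_norm, norm_smul, Real.norm_eq_abs,
          abs_of_nonneg (inv_nonneg.mpr hpos.le), inv_mul_cancel₀ (ne_of_gt hpos)]
      · simp only [smul_smul]
        rw [mul_inv_cancel₀ (ne_of_gt hpos), one_smul]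
  rwa [h3] at h2


end MyAux

/-- the root-counting function `N(·)` is constant on the annulus
`Λ = {λ : δ̂ < |λ| < 1}`, where `γ̂` is the minimizer of `φ` on `(1,∞)` and
`δ̂ := φ(γ̂)`. -/
theorem Ncount_constant_on_annulus
    (g d : ℕ) (hg : 1 ≤ g) (hd : 1 ≤ d) (a : ℤ → ℝ)
    (ha01 : ∀ k ∈ Finset.Icc (-(g : ℤ)) (d : ℤ), 0 ≤ a k ∧ a k ≤ 1)
    (hag : 0 < a (-(g : ℤ))) (had : 0 < a (d : ℤ))
    (hsum : ∑ k ∈ Finset.Icc (-(g : ℤ)) (d : ℤ), a k = 1)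
    (hneri : ∑ k ∈ Finset.Icc (-(g : ℤ)) (d : ℤ), (k : ℝ) * a k < 0)
    (γhat : ℝ) (hγhat1 : 1 < γhat)
    (hγhatmin : ∀ t : ℝ, 1 < t → phiF g d a γhat ≤ phiF g d a t) :
    ∀ lam₁ lam₂ : ℂ,
      phiF g d a γhat < ‖lam₁‖ → ‖lam₁‖ < 1 →
      phiF g d a γhat < ‖lam₂‖ → ‖lam₂‖ < 1 →
      Ncount g d a γhat lam₁ = Ncount g d a γhat lam₂ := by
  intro lam₁ lam₂ h11 h12 h21 h22
  set δ := phiF g d a γhat with hδdef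
  have hγ0 : (0:ℝ) < γhat := lt_trans one_pos hγhat1
  have hδ0 : 0 ≤ δ := by
    rw [hδdef, phiF]
    exact Finset.sum_nonneg fun k hk => mul_nonneg (ha01 k hk).1 (zpow_nonneg hγ0.le k)
  have hadC : ((a d : ℝ):ℂ) ≠ 0 := by exact_mod_cast ne_of_gt had
  set cinv : ℂ := ((a d : ℝ):ℂ)⁻¹ with hcinv
  have hcinv0 : cinv ≠ 0 := inv_ne_zero hadC
  set P : ℂ → Polynomial ℂ := fun μ => Polynomial.C cinv * Epoly g d a μ with hP
  have hProots : ∀ μ, (P μ).roots = (Epoly g d a μ).roots :=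
    fun μ => Polynomial.roots_C_mul _ hcinv0
  have hPdeg : ∀ μ, (P μ).natDegree = g + d := fun μ => by
    rw [hP]
    simp only
    rw [Polynomial.natDegree_C_mul hcinv0, EpolyNatDegree g d a μ hd (ne_of_gt had)]
  have hPmonic : ∀ μ, (P μ).Monic := fun μ => by
    rw [Polynomial.Monic, Polynomial.leadingCoeff, hPdeg μ, hP]
    simp only
    rw [Polynomial.coeff_C_mul, EpolyCoeffTop g d a μ hd]
    exact inv_mul_cancel₀ hadC
  have hPcoeff : ∀ (i:ℕ) (μ:ℂ), (P μ).coeff i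
      = cinv * ((∑ k ∈ Finset.Icc (-(g:ℤ)) (d:ℤ),
            Polynomial.C ((a k:ℝ):ℂ) * Polynomial.X ^ ((g:ℤ)+k).toNat).coeff i
          - μ * (Polynomial.X ^ g : Polynomial ℂ).coeff i) := fun i μ => by
    rw [hP]
    simp only
    rw [Polynomial.coeff_C_mul, Epoly, Polynomial.coeff_sub, Polynomial.coeff_C_mul]
  have hNc : ∀ μ : ℂ, Ncount g d a γhat μ
      = Multiset.card (Multiset.filter (fun z => ‖z‖ < γhat) (P μ).roots) := fun μ => by
    rw [Ncount, hProots μ]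
  have hloc : ∀ lam₀ : ℂ, δ < ‖lam₀‖ →
      ∀ᶠ μ in nhds lam₀, Ncount g d a γhat μ = Ncount g d a γhat lam₀ := by
    intro lam₀ hlam₀
    by_contra hcon
    rw [Filter.not_eventually] at hcon
    have hseq : ∀ n : ℕ, ∃ μ : ℂ, μ ∈ Metric.ball lam₀ (1/(n+1)) ∧
        ¬ Ncount g d a γhat μ = Ncount g d a γhat lam₀ := by
      intro n
      have hball : ∀ᶠ μ in nhds lam₀, μ ∈ Metric.ball lam₀ (1/(n+1)) :=
        Metric.ball_mem_nhds lam₀ (by positivity)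
      exact (hcon.and_eventually hball).exists.imp fun μ h => ⟨h.2, h.1⟩
    choose μs hμd hμne using hseq
    have hμtend : Filter.Tendsto μs Filter.atTop (nhds lam₀) := by
      refine tendsto_iff_dist_tendsto_zero.mpr ?_
      refine squeeze_zero (fun n => dist_nonneg) (fun n => (Metric.mem_ball.mp (hμd n)).le) ?_
      exact tendsto_one_div_add_atTop_nhds_zero_nat
    have hcc : ∀ i, Filter.Tendsto (fun n => (P (μs n)).coeff i) Filter.atTop
        (nhds ((P lam₀).coeff i)) := by
      intro i
      simp only [hPcoeff i]
      exact Filter.Tendsto.const_mul cinv (tendsto_const_nhds.sub (hμtend.mul_const _))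
    have hr : ∀ z ∈ (P lam₀).roots, ‖z‖ ≠ γhat := by
      intro z hz
      rw [hProots] at hz
      have hz' : (Epoly g d a lam₀).IsRoot z := (Polynomial.mem_roots'.mp hz).2
      exact EpolyNoCircleRoot g d a lam₀ γhat hγ0 (fun k hk => (ha01 k hk).1) hlam₀ z hz'
    obtain ⟨n, hn⟩ := myCountSubseq (g+d) (fun n => P (μs n)) (P lam₀) γhat
      (fun n => hPmonic _) (fun n => hPdeg _) (hPmonic _) (hPdeg _) hcc hr
    exact hμne n (by rw [hNc, hNc]; exact hn)
  -- global argument via preconnectedness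
  by_contra hne
  set c := Ncount g d a γhat lam₁ with hc
  set S := {lam : ℂ | δ < ‖lam‖ ∧ ‖lam‖ < 1} with hS
  set V₁ := {μ : ℂ | ∃ t : Set ℂ, IsOpen t ∧ μ ∈ t ∧ ∀ ν ∈ t, Ncount g d a γhat ν = c} with hV₁
  set V₂ := {μ : ℂ | ∃ t : Set ℂ, IsOpen t ∧ μ ∈ t ∧ ∀ ν ∈ t, Ncount g d a γhat ν ≠ c} with hV₂
  have hV₁open : IsOpen V₁ := by
    refine isOpen_iff_forall_mem_open.mpr ?_
    rintro μ ⟨t, ht, hμt, hall⟩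
    exact ⟨t, fun ν hν => ⟨t, ht, hν, hall⟩, ht, hμt⟩
  have hV₂open : IsOpen V₂ := by
    refine isOpen_iff_forall_mem_open.mpr ?_
    rintro μ ⟨t, ht, hμt, hall⟩
    exact ⟨t, fun ν hν => ⟨t, ht, hν, hall⟩, ht, hμt⟩
  have hmemV : ∀ μ : ℂ, δ < ‖μ‖ → (Ncount g d a γhat μ = c → μ ∈ V₁)
      ∧ (Ncount g d a γhat μ ≠ c → μ ∈ V₂) := by
    intro μ hμ
    obtain ⟨t, htall, htopen, hμt⟩ := eventually_nhds_iff.mp (hloc μ hμ)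
    constructor
    · intro hEq
      exact ⟨t, htopen, hμt, fun ν hν => (htall ν hν).trans hEq⟩
    · intro hNeq
      exact ⟨t, htopen, hμt, fun ν hν => by rw [htall ν hν]; exact hNeq⟩
  have hcover : S ⊆ V₁ ∪ V₂ := by
    rintro μ ⟨hμ1, hμ2⟩
    rcases eq_or_ne (Ncount g d a γhat μ) c with h | h
    · exact Or.inl ((hmemV μ hμ1).1 h)
    · exact Or.inr ((hmemV μ hμ1).2 h)
  have hS1 : (S ∩ V₁).Nonempty := ⟨lam₁, ⟨h11, h12⟩, (hmemV lam₁ h11).1 rfl⟩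
  have hS2 : (S ∩ V₂).Nonempty := ⟨lam₂, ⟨h21, h22⟩, (hmemV lam₂ h21).2 (Ne.symm hne)⟩
  obtain ⟨μ, -, hμ1, hμ2⟩ := myAnnulusPreconnected hδ0 V₁ V₂ hV₁open hV₂open hcover hS1 hS2
  obtain ⟨t₁, -, hμt₁, hall₁⟩ := hμ1
  obtain ⟨t₂, -, hμt₂, hall₂⟩ := hμ2
  exact hall₂ μ hμt₂ (hall₁ μ hμt₁)
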